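/- For the Kähler AR(2) geometry, ψ₂ = (1 − |ξ¹|²)(1 − |ξ²|²) is a positive superharmonic function: Δψ₂/ψ₂ = −2(2 − ξ¹ξ̄² − ξ²ξ̄¹)/|ξ¹ − ξ²|² < 0. -/

import Mathlib

set_option maxHeartbeats 1000000

/-- Holomorphic partial derivative `∂_i F` in the `i`-th complex coordinate. -/
noncomputable def pd {n : ℕ} (F : (Fin n → ℂ) → ℂ) (i : Fin n) (ξ : Fin n → ℂ) : ℂ :=
  deriv (fun t => F (Function.update ξ i t)) (ξ i)

/-- Componentwise complex conjugation of a coordinate vector. -/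
def conjVec {n : ℕ} (ζ : Fin n → ℂ) : Fin n → ℂ := fun m => starRingEnd ℂ (ζ m)

/-- The mixed Wirtinger Hessian `∂_i ∂_{¯j} ψ` of a function given in the polarized form
`ψc ξ ζ` (holomorphic in `ξ` and in `ζ`), evaluated at `ζ = conj ξ`. -/
noncomputable def mixedHess {n : ℕ} (ψc : (Fin n → ℂ) → (Fin n → ℂ) → ℂ)
    (ξ : Fin n → ℂ) (i j : Fin n) : ℂ :=
  pd (fun ξ' => pd (ψc ξ') j (conjVec ξ)) i ξ

/-- The AR metric `g_{i¯j} = 1/(1 − ξ^i conj(ξ^j))`. -/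
noncomputable def arMetric {n : ℕ} (ξ : Fin n → ℂ) : Matrix (Fin n) (Fin n) ℂ :=
  Matrix.of fun i j => 1 / (1 - ξ i * starRingEnd ℂ (ξ j))

/-- The Kähler Laplace–Beltrami operator `Δψ = 2 g^{i¯j} ∂_i ∂_{¯j} ψ`, with
`g^{i¯j} = (g⁻¹)_{ji}`. -/
noncomputable def kahlerLap {n : ℕ} (ψc : (Fin n → ℂ) → (Fin n → ℂ) → ℂ)
    (ξ : Fin n → ℂ) : ℂ :=
  2 * ∑ i, ∑ j, (arMetric ξ)⁻¹ j i * mixedHess ψc ξ i j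

lemma dlin (p q x : ℂ) : deriv (fun t => p + q * t) x = q := by
  have h : HasDerivAt (fun t : ℂ => p + q * t) q x := by
    simpa using ((hasDerivAt_id x).const_mul q).const_add p
  exact h.deriv

lemma daff {f : ℂ → ℂ} (p q x : ℂ) (hf : ∀ t, f t = p + q * t) : deriv f x = q := by
  have : f = fun t => p + q * t := funext hf
  rw [this, dlin]

lemma hess (ξ : Fin 2 → ℂ) (i j : Fin 2) :
    mixedHess (fun ξ' ζ => (1 - ξ' 0 * ζ 0) * (1 - ξ' 1 * ζ 1)) ξ i j
      = !![-(1 - ξ 1 * starRingEnd ℂ (ξ 1)), ξ 1 * starRingEnd ℂ (ξ 0);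
           ξ 0 * starRingEnd ℂ (ξ 1), -(1 - ξ 0 * starRingEnd ℂ (ξ 0))] i j := by
  have hin : ∀ (j : Fin 2) (x : Fin 2 → ℂ),
      deriv (fun s => (1 - x 0 * Function.update (conjVec ξ) j s 0) *
        (1 - x 1 * Function.update (conjVec ξ) j s 1)) (conjVec ξ j)
      = if j = 0 then -(x 0 * (1 - x 1 * conjVec ξ 1))
        else -(x 1 * (1 - x 0 * conjVec ξ 0)) := by
    intro j x
    fin_cases j <;> simp only [if_true, reduceIte, Fin.isValue] <;>
      [refine daff ((1 - x 1 * conjVec ξ 1)) _ _ (fun t => ?_);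
       refine daff ((1 - x 0 * conjVec ξ 0)) _ _ (fun t => ?_)] <;>
      · simp [Function.update]
        ring
  unfold mixedHess pd
  simp only [hin]
  fin_cases i <;> fin_cases j <;>
    simp only [Fin.isValue, reduceIte, Fin.zero_eta, Fin.mk_one, Matrix.cons_val',
      Matrix.cons_val_zero, Matrix.cons_val_one, Matrix.head_cons, Matrix.head_fin_const,
      Matrix.empty_val', Matrix.cons_val_fin_one] <;>
    [refine daff 0 _ _ (fun t => ?_); refine daff (-(ξ 1)) _ _ (fun t => ?_);
     refine daff (-(ξ 0)) _ _ (fun t => ?_); refine daff 0 _ _ (fun t => ?_)] <;>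
    · simp [Function.update, conjVec]
      ring

/-- For the Kähler AR(2) geometry, `ψ₂ = (1−|ξ¹|²)(1−|ξ²|²)` is a positive superharmonic
function: `Δψ₂/ψ₂ = −2(2 − ξ¹ξ̄² − ξ²ξ̄¹)/|ξ¹ − ξ²|² < 0`. -/
theorem stmt17 (ξ : Fin 2 → ℂ) (h0 : ‖ξ 0‖ < 1) (h1 : ‖ξ 1‖ < 1) (hne : ξ 0 ≠ ξ 1) :
    kahlerLap (fun ξ' ζ => (1 - ξ' 0 * ζ 0) * (1 - ξ' 1 * ζ 1)) ξ
        = (-2 * (2 - ξ 0 * starRingEnd ℂ (ξ 1) - ξ 1 * starRingEnd ℂ (ξ 0))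
            / ((‖ξ 0 - ξ 1‖ ^ 2 : ℝ) : ℂ))
          * (((1 - ‖ξ 0‖ ^ 2) * (1 - ‖ξ 1‖ ^ 2) : ℝ) : ℂ)
      ∧ 0 < (1 - ‖ξ 0‖ ^ 2) * (1 - ‖ξ 1‖ ^ 2)
      ∧ (kahlerLap (fun ξ' ζ => (1 - ξ' 0 * ζ 0) * (1 - ξ' 1 * ζ 1)) ξ).re < 0
      ∧ (kahlerLap (fun ξ' ζ => (1 - ξ' 0 * ζ 0) * (1 - ξ' 1 * ζ 1)) ξ).im = 0 := by
  set a := ξ 0 with ha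
  set b := ξ 1 with hb
  have key : ∀ u v : ℂ, ‖u‖ < 1 → ‖v‖ < 1 → (1 : ℂ) - u * starRingEnd ℂ v ≠ 0 := by
    intro u v hu hv h
    rw [sub_eq_zero] at h
    have hlt : ‖u * starRingEnd ℂ v‖ < 1 := by
      rw [norm_mul, RCLike.norm_conj]
      nlinarith [norm_nonneg u, norm_nonneg v]
    rw [← h] at hlt
    simp at hlt
  have haa : (1 : ℂ) - a * starRingEnd ℂ a ≠ 0 := key a a h0 h0
  have hbb : (1 : ℂ) - b * starRingEnd ℂ b ≠ 0 := key b b h1 h1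
  have hab : (1 : ℂ) - a * starRingEnd ℂ b ≠ 0 := key a b h0 h1
  have hba : (1 : ℂ) - b * starRingEnd ℂ a ≠ 0 := key b a h1 h0
  have hsub : a - b ≠ 0 := sub_ne_zero.mpr hne
  have hcsub : starRingEnd ℂ a - starRingEnd ℂ b ≠ 0 := by
    rw [← map_sub, map_ne_zero]
    exact hsub
  set A := starRingEnd ℂ a with hA
  set B := starRingEnd ℂ b with hB
  set D := (a - b) * (A - B) with hD
  have hDne : D ≠ 0 := mul_ne_zero hsub hcsub
  -- explicit inverse of the metric
  have hinv : (arMetric ξ)⁻¹ = D⁻¹ •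
      !![(1 - a * A) * (1 - a * B) * (1 - b * A), -((1 - a * A) * (1 - b * B) * (1 - b * A));
         -((1 - a * A) * (1 - b * B) * (1 - a * B)), (1 - b * B) * (1 - a * B) * (1 - b * A)] := by
    refine Matrix.inv_eq_right_inv ?_
    ext i j
    fin_cases i <;> fin_cases j <;>
      simp only [Matrix.mul_apply, Fin.sum_univ_two, arMetric, Matrix.of_apply, ← ha, ← hb,
        ← hA, ← hB, Matrix.smul_apply, smul_eq_mul, Matrix.cons_val', Matrix.cons_val_zero,
        Matrix.cons_val_one, Matrix.head_cons, Matrix.empty_val', Matrix.cons_val_fin_one,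
        Matrix.head_fin_const, Matrix.one_apply_eq, Fin.zero_eta, Fin.mk_one,
        Matrix.one_apply, Fin.isValue, one_div] <;>
      norm_num <;> field_simp <;> ring
  -- the Laplacian, explicitly
  have hL : kahlerLap (fun ξ' ζ => (1 - ξ' 0 * ζ 0) * (1 - ξ' 1 * ζ 1)) ξ
      = -2 * (2 - a * B - b * A) / D * ((1 - a * A) * (1 - b * B)) := by
    rw [kahlerLap, Fin.sum_univ_two, Fin.sum_univ_two]
    simp only [hess, hinv]
    simp only [Fin.sum_univ_two, Matrix.of_apply, Matrix.smul_apply, smul_eq_mul, Matrix.cons_val', Matrix.cons_val_zero,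
      Matrix.cons_val_one, Matrix.head_cons, Matrix.empty_val', Matrix.cons_val_fin_one,
      Matrix.head_fin_const, ← ha, ← hb, ← hA, ← hB]
    rw [hD] at *
    field_simp
    ring
  -- coercion identities
  have hns : ((‖a - b‖ ^ 2 : ℝ) : ℂ) = (a - b) * (A - B) := by
    rw [hA, hB, ← map_sub]
    push_cast
    rw [Complex.mul_conj']
  have hca : ((1 - ‖a‖ ^ 2 : ℝ) : ℂ) = 1 - a * A := by
    rw [hA]
    push_cast
    rw [Complex.mul_conj']
  have hcb : ((1 - ‖b‖ ^ 2 : ℝ) : ℂ) = 1 - b * B := by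
    rw [hB]
    push_cast
    rw [Complex.mul_conj']
  have h2re : (2 : ℂ) - a * B - b * A = ((2 - 2 * (a * B).re : ℝ) : ℂ) := by
    have hc : b * A = starRingEnd ℂ (a * B) := by
      rw [hA, hB]
      simp [mul_comm]
    rw [hc]
    have h' := Complex.add_conj (a * B)
    rw [sub_sub, h']
    push_cast
    ring
  -- the first conjunct
  have heq : kahlerLap (fun ξ' ζ => (1 - ξ' 0 * ζ 0) * (1 - ξ' 1 * ζ 1)) ξ
      = (-2 * (2 - a * B - b * A) / ((‖a - b‖ ^ 2 : ℝ) : ℂ))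
        * (((1 - ‖a‖ ^ 2) * (1 - ‖b‖ ^ 2) : ℝ) : ℂ) := by
    rw [hL, hD, ← hns]
    rw [show (((1 - ‖a‖ ^ 2) * (1 - ‖b‖ ^ 2) : ℝ) : ℂ)
        = ((1 - ‖a‖ ^ 2 : ℝ) : ℂ) * ((1 - ‖b‖ ^ 2 : ℝ) : ℂ) by push_cast; ring]
    rw [hca, hcb]
  have hpos0 : (0 : ℝ) < 1 - ‖a‖ ^ 2 := by nlinarith [norm_nonneg a]
  have hpos1 : (0 : ℝ) < 1 - ‖b‖ ^ 2 := by nlinarith [norm_nonneg b]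
  have hnpos : (0 : ℝ) < ‖a - b‖ ^ 2 :=
    pow_pos (norm_pos_iff.mpr hsub) 2
  -- realness : the Laplacian is a real number
  have hre : (a * B).re < 1 := by
    have h1' := Complex.re_le_norm (a * B)
    have h2' : ‖a * B‖ < 1 := by
      rw [hB, norm_mul, RCLike.norm_conj]
      nlinarith [norm_nonneg a, norm_nonneg b]
    linarith
  have hreal : kahlerLap (fun ξ' ζ => (1 - ξ' 0 * ζ 0) * (1 - ξ' 1 * ζ 1)) ξ
      = ((-2 * (2 - 2 * (a * B).re) / ‖a - b‖ ^ 2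
          * ((1 - ‖a‖ ^ 2) * (1 - ‖b‖ ^ 2)) : ℝ) : ℂ) := by
    rw [heq, h2re]
    push_cast
    ring
  refine ⟨heq, mul_pos hpos0 hpos1, ?_, ?_⟩
  · rw [hreal, Complex.ofReal_re]
    have hneg : -2 * (2 - 2 * (a * B).re) < 0 := by nlinarith
    have hq : -2 * (2 - 2 * (a * B).re) / ‖a - b‖ ^ 2 < 0 :=
      div_neg_of_neg_of_pos hneg hnpos
    exact mul_neg_of_neg_of_pos hq (mul_pos hpos0 hpos1)
  · rw [hreal, Complex.ofReal_im]
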